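/- Let X ⊆ ℝ^m and Y ⊆ ℝ^n be nonempty compact convex sets, A a q×n and B a q×m real matrix, b ∈ ℝ^q. Let f₀ : ℝ^n → ℝ and f₁ : ℝ^m → ℝ be convex and differentiable, and define 𝒬(x) = inf { f₀(y) + f₁(x) : y ∈ Y, Ay + Bx = b } and θ_x(λ) = inf_{y ∈ Y} { f₀(y) + f₁(x) + λᵀ(Ay + Bx − b) }. Assume for every x ∈ X there exists y_x ∈ Y (in the relative interior of Y when Y is not polyhedral) with Ay_x + Bx = b, and that θ_{x̄} is strongly concave with constant α_D(x̄) > 0 for ‖·‖₂ on a convex set D_{x̄} ⊆ ℝ^q containing all optimal solutions of sup_{λ ∈ ℝ^q} θ_{x̄}(λ). Fix x̄ ∈ X and ε ≥ 0; let ŷ ∈ Y with Aŷ + Bx̄ = b and f₀(ŷ) + f₁(x̄) ≤ 𝒬(x̄) + ε, and let λ̂ ∈ D_{x̄} with θ_{x̄}(λ̂) ≥ 𝒬(x̄) − ε. Set η(ε, x̄) = ε + ‖Bᵀ‖₂ · sqrt(2ε/α_D(x̄)) · Diam(X). Then the affine function C(x) = f₀(ŷ) + f₁(x̄) − η(ε,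 x̄) + ⟨∇f₁(x̄) + Bᵀλ̂, x − x̄⟩ satisfies 𝒬(x) ≥ C(x) for every x ∈ X, and 𝒬(x̄) − C(x̄) ≤ η(ε, x̄). -/

import Mathlib

set_option maxHeartbeats 1000000
set_option synthInstance.maxHeartbeats 400000


open scoped RealInnerProductSpace Matrix
noncomputable section

/-- `ℝ^k` with the Euclidean norm. -/
abbrev E (k : ℕ) := EuclideanSpace ℝ (Fin k)

/-- Reinterpret a plain vector of `ℝ^k` as an element of Euclidean space. -/
def toE {k : ℕ} (v : Fin k → ℝ) : E k := WithLp.toLp 2 v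

/-- A polyhedral set: a finite intersection of closed half-spaces. -/
def IsPolyhedral {k : ℕ} (s : Set (E k)) : Prop :=
  ∃ (r : ℕ) (c : Fin r → E k) (d : Fin r → ℝ), s = {x : E k | ∀ i, ⟪c i, x⟫ ≤ d i}

/-- Strong concavity with constant `α` w.r.t. `‖·‖₂` on a set, at points where the function
is finite. -/
def StrongConcaveOnE {k : ℕ} (C : Set (E k)) (α : ℝ) (θ : E k → EReal) : Prop :=
  ∀ ⦃u⦄, u ∈ C → θ u ≠ ⊤ → θ u ≠ ⊥ → ∀ ⦃v⦄, v ∈ C → θ v ≠ ⊤ → θ v ≠ ⊥ →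
    ∀ t ∈ Set.Icc (0:ℝ) 1,
      ((t * (θ u).toReal + (1 - t) * (θ v).toReal
          + α * t * (1 - t) / 2 * ‖u - v‖ ^ 2 : ℝ) : EReal) ≤ θ (t • u + (1 - t) • v)

/-- The value function `𝒬(x) = inf { f₀(y) + f₁(x) : y ∈ Y, Ay + Bx = b }`. -/
def QvarLin {n m q : ℕ} (Y : Set (E n)) (A : Matrix (Fin q) (Fin n) ℝ)
    (B : Matrix (Fin q) (Fin m) ℝ) (b : Fin q → ℝ)
    (f₀ : E n → ℝ) (f₁ : E m → ℝ) (x : E m) : EReal :=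
  ⨅ (y : E n) (_ : y ∈ Y) (_ : A.mulVec y + B.mulVec x = b), ((f₀ y + f₁ x : ℝ) : EReal)

/-- The dual function `θ_x(λ) = inf_{y ∈ Y} { f₀(y) + f₁(x) + λᵀ(Ay + Bx − b) }`. -/
def thetaLin {n m q : ℕ} (Y : Set (E n)) (A : Matrix (Fin q) (Fin n) ℝ)
    (B : Matrix (Fin q) (Fin m) ℝ) (b : Fin q → ℝ)
    (f₀ : E n → ℝ) (f₁ : E m → ℝ) (x : E m) (lam : E q) : EReal :=
  ⨅ (y : E n) (_ : y ∈ Y),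
    ((f₀ y + f₁ x + (lam : Fin q → ℝ) ⬝ᵥ (A.mulVec y + B.mulVec x - b) : ℝ) : EReal)

/-- Gradient inequality for convex differentiable functions. -/
lemma grad_ineq {k : ℕ} {f : E k → ℝ} (hc : ConvexOn ℝ Set.univ f)
    (hd : Differentiable ℝ f) (x y : E k) :
    f x + ⟪gradient f x, y - x⟫ ≤ f y := by
  rcases eq_or_ne y x with rfl | hne
  · simp
  · set g : ℝ → ℝ := fun t => f (x + t • (y - x)) with hg
    have hcurve : ∀ t : ℝ, HasDerivAt (fun t : ℝ => x + t • (y - x)) (y - x) t := by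
      intro t
      simpa using ((hasDerivAt_id t).smul_const (y - x)).const_add x
    have h0 : x + (0:ℝ) • (y - x) = x := by simp
    have hgd : HasDerivAt g ⟪gradient f x, y - x⟫ 0 := by
      have hgrad : HasGradientAt f (gradient f x) x := (hd x).hasGradientAt
      have hfd : HasFDerivAt f (InnerProductSpace.toDual ℝ (E k) (gradient f x))
          (x + (0:ℝ) • (y - x)) := by rw [h0]; exact (hasGradientAt_iff_hasFDerivAt).1 hgrad
      have := hfd.comp_hasDerivAt (0:ℝ) (hcurve 0)
      simpa [hg, Function.comp_def] using this
    have hgc : ConvexOn ℝ Set.univ g := by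
      have : g = f ∘ (AffineMap.lineMap x y : ℝ →ᵃ[ℝ] E k) := by
        funext t; simp only [hg, Function.comp_apply, AffineMap.lineMap_apply_module]; congr 1; module
      rw [this]
      simpa using hc.comp_affineMap (AffineMap.lineMap x y)
    have hslope := hgc.le_slope_of_hasDerivAt (Set.mem_univ 0) (Set.mem_univ 1)
      one_pos hgd
    have : slope g 0 1 = g 1 - g 0 := by simp [slope_def_field]
    rw [this] at hslope
    have hg0 : g 0 = f x := by simp [hg]
    have hg1 : g 1 = f y := by simp [hg]
    rw [hg0, hg1] at hslope
    linarith


/-- A finite convex function on Euclidean space has a subgradient at every point. -/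
lemma exists_subgradient {k : ℕ} {w : E k → ℝ} (hw : ConvexOn ℝ Set.univ w) (u₀ : E k) :
    ∃ g : E k, ∀ u, w u₀ + ⟪g, u - u₀⟫ ≤ w u := by
  have hwc : Continuous w := hw.locallyLipschitz.continuous
  set s : Set (E k × ℝ) := {p | w p.1 < p.2} with hs
  have hso : IsOpen s := isOpen_lt (hwc.comp continuous_fst) continuous_snd
  have hscv : Convex ℝ s := by
    rw [convex_iff_forall_pos]
    rintro ⟨p1, p2⟩ hp ⟨q1, q2⟩ hq a b ha hb hab
    have h1 : w (a • p1 + b • q1) ≤ a * w p1 + b * w q1 :=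
      hw.2 (Set.mem_univ _) (Set.mem_univ _) ha.le hb.le hab
    have h2 : a * w p1 + b * w q1 < a * p2 + b * q2 :=
      add_lt_add ((mul_lt_mul_iff_right₀ ha).2 hp) ((mul_lt_mul_iff_right₀ hb).2 hq)
    exact lt_of_le_of_lt h1 h2
  have hx : ((u₀, w u₀) : E k × ℝ) ∉ s := by simp [hs]
  obtain ⟨φ, hφ⟩ := geometric_hahn_banach_open_point hscv hso hx
  set sc : ℝ := φ (0, 1) with hsc
  have hφsplit : ∀ (u : E k) (r : ℝ), φ (u, r) = φ (u, 0) + r * sc := by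
    intro u r
    have : (u, r) = (u, (0:ℝ)) + r • ((0 : E k), (1:ℝ)) := by
      simp [Prod.ext_iff]
    rw [this, map_add, map_smul]; simp [hsc, smul_eq_mul]
  have hscneg : sc < 0 := by
    have h1 : ((u₀, w u₀ + 1) : E k × ℝ) ∈ s := by simp [hs]
    have h2 := hφ _ h1
    rw [hφsplit u₀ (w u₀ + 1), hφsplit u₀ (w u₀)] at h2
    nlinarith
  have hscpos : 0 < -sc := neg_pos.2 hscneg
  have key : ∀ u : E k, φ (u, 0) + w u * sc ≤ φ (u₀, 0) + w u₀ * sc := by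
    intro u
    have h2 : ∀ δ : ℝ, 0 < δ → φ (u, 0) + (w u + δ) * sc < φ (u₀, 0) + w u₀ * sc := by
      intro δ hδ
      have h1 : ((u, w u + δ) : E k × ℝ) ∈ s := by simp [hs, hδ]
      have h3 := hφ _ h1
      rwa [hφsplit u (w u + δ), hφsplit u₀ (w u₀)] at h3
    refine le_of_forall_pos_le_add (fun δ hδ => ?_)
    have hd2 : 0 < δ / (-sc) := div_pos hδ hscpos
    have h4 := h2 _ hd2
    have hrw : (w u + δ / (-sc)) * sc = w u * sc - δ := by
      field_simp [hscneg.ne]; ring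
    rw [hrw] at h4
    linarith
  set ψ : E k →L[ℝ] ℝ := φ.comp (ContinuousLinearMap.inl ℝ (E k) ℝ) with hψ
  refine ⟨(InnerProductSpace.toDual ℝ (E k)).symm ((-sc)⁻¹ • ψ), fun u => ?_⟩
  have hψa : ∀ z : E k, ψ z = φ (z, 0) := fun z => rfl
  have hval : ⟪(InnerProductSpace.toDual ℝ (E k)).symm ((-sc)⁻¹ • ψ), u - u₀⟫
      = (-sc)⁻¹ * (φ (u - u₀, 0)) := by
    rw [InnerProductSpace.toDual_symm_apply]
    simp only [ContinuousLinearMap.smul_apply, smul_eq_mul]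
    rw [hψa]
  rw [hval]
  have hkey := key u
  have hlin : φ (u - u₀, 0) = φ (u, 0) - φ (u₀, 0) := by
    have : ((u - u₀, (0:ℝ)) : E k × ℝ) = (u, 0) - (u₀, 0) := by simp [Prod.ext_iff]
    rw [this, map_sub]
  rw [hlin]
  have h4 : φ (u, 0) - φ (u₀, 0) ≤ (w u - w u₀) * (-sc) := by nlinarith
  have h5 : (-sc)⁻¹ * (φ (u, 0) - φ (u₀, 0)) ≤ w u - w u₀ := by
    calc (-sc)⁻¹ * (φ (u, 0) - φ (u₀, 0)) ≤ (-sc)⁻¹ * ((w u - w u₀) * (-sc)) :=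
          mul_le_mul_of_nonneg_left h4 (inv_nonneg.2 hscpos.le)
      _ = w u - w u₀ := by field_simp [hscneg.ne]
  linarith


section Farkas
variable {k : ℕ} {ι : Type} [Fintype ι] [DecidableEq ι]

/-- The cone generated by a finite family of vectors. -/
def coneOf (g : ι → E k) : Set (E k) :=
  {x | ∃ μ : ι → ℝ, (∀ i, 0 ≤ μ i) ∧ x = ∑ i, μ i • g i}

/-- Conic Carathéodory: every element of the cone is a nonneg. combination supported on a
linearly independent subfamily. -/
lemma coneOf_cara (g : ι → E k) (x : E k) (hx : x ∈ coneOf g) :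
    ∃ s : Finset ι, LinearIndependent ℝ (fun i : s => g i) ∧
      ∃ μ : ι → ℝ, (∀ i, 0 ≤ μ i) ∧ (∀ i ∉ s, μ i = 0) ∧ x = ∑ i, μ i • g i := by
  obtain ⟨μ, hμ, hxs⟩ := hx
  have main : ∀ s : Finset ι, ∀ μ : ι → ℝ, (∀ i, 0 ≤ μ i) → (∀ i ∉ s, μ i = 0) →
      ∃ t : Finset ι, LinearIndependent ℝ (fun i : t => g i) ∧
        ∃ ν : ι → ℝ, (∀ i, 0 ≤ ν i) ∧ (∀ i ∉ t, ν i = 0) ∧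
          ∑ i, ν i • g i = ∑ i, μ i • g i := by
    intro s
    induction s using Finset.strongInduction with
    | _ s IH =>
      intro μ hμ hsupp
      by_cases hind : LinearIndependent ℝ (fun i : s => g i)
      · exact ⟨s, hind, μ, hμ, hsupp, rfl⟩
      · obtain ⟨c, hc0, i₁, hi₁⟩ := Fintype.not_linearIndependent_iff.1 hind
        -- extend c to ι by zero
        set cc : ι → ℝ := fun i => if h : i ∈ s then c ⟨i, h⟩ else 0 with hcc
        have hccsum : ∑ i, cc i • g i = 0 := by
          rw [← Finset.sum_subset (Finset.subset_univ s)]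
          · rw [← hc0, ← Finset.sum_attach s (fun i => cc i • g i)]
            congr 1; ext i; simp [hcc, i.2]
          · intro i _ hi; simp [hcc, hi]
        have hccne : ∃ j ∈ s, cc j ≠ 0 := ⟨i₁, i₁.2, by simpa [hcc, i₁.2] using hi₁⟩
        -- WLOG there is a positive coefficient
        have wlog : ∀ d : ι → ℝ, (∑ i, d i • g i = 0) → (∀ i ∉ s, d i = 0) →
            (∃ j ∈ s, 0 < d j) →
            ∃ t : Finset ι, LinearIndependent ℝ (fun i : t => g i) ∧
              ∃ ν : ι → ℝ, (∀ i, 0 ≤ ν i) ∧ (∀ i ∉ t, ν i = 0) ∧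
                ∑ i, ν i • g i = ∑ i, μ i • g i := by
          intro d hdsum hdsupp ⟨j₀, hj₀s, hj₀⟩
          set P : Finset ι := s.filter (fun i => 0 < d i) with hP
          have hPne : P.Nonempty := ⟨j₀, by simp [hP, hj₀s, hj₀]⟩
          set r : ℝ := P.inf' hPne (fun i => μ i / d i) with hr
          obtain ⟨i₀, hi₀P, hi₀⟩ := Finset.exists_mem_eq_inf' hPne (fun i => μ i / d i)
          have hi₀d : 0 < d i₀ := (Finset.mem_filter.1 hi₀P).2
          have hi₀s : i₀ ∈ s := (Finset.mem_filter.1 hi₀P).1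
          have hri₀ : r = μ i₀ / d i₀ := by rw [hr, hi₀]
          have hrnn : 0 ≤ r := by
            rw [hri₀]; exact div_nonneg (hμ i₀) hi₀d.le
          set ν : ι → ℝ := fun i => μ i - r * d i with hν
          have hνnn : ∀ i, 0 ≤ ν i := by
            intro i
            by_cases hip : i ∈ P
            · have hdi : 0 < d i := (Finset.mem_filter.1 hip).2
              have : r ≤ μ i / d i := by rw [hr]; exact Finset.inf'_le _ hip
              have := (le_div_iff₀ hdi).1 this
              simp only [hν]; linarith
            · have hdi : d i ≤ 0 := by
                by_cases his : i ∈ s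
                · by_contra h
                  exact hip (Finset.mem_filter.2 ⟨his, lt_of_not_ge h⟩)
                · rw [hdsupp i his]
              have : r * d i ≤ 0 := mul_nonpos_of_nonneg_of_nonpos hrnn hdi
              simp only [hν]; linarith [hμ i]
          have hνi₀ : ν i₀ = 0 := by
            simp only [hν, hri₀]; field_simp; ring
          have hνsupp : ∀ i ∉ s.erase i₀, ν i = 0 := by
            intro i hi
            rcases eq_or_ne i i₀ with rfl | hne
            · exact hνi₀
            · have his : i ∉ s := fun h => hi (Finset.mem_erase.2 ⟨hne, h⟩)
              simp [hν, hsupp i his, hdsupp i his]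
          have hνsum : ∑ i, ν i • g i = ∑ i, μ i • g i := by
            simp only [hν, sub_smul, Finset.sum_sub_distrib, mul_smul]
            rw [← Finset.smul_sum, hdsum]
            simp
          obtain ⟨t, hlin, ν', h1, h2, h3⟩ :=
            IH (s.erase i₀) (Finset.erase_ssubset hi₀s) ν hνnn hνsupp
          exact ⟨t, hlin, ν', h1, h2, by rw [h3, hνsum]⟩
        rcases hccne with ⟨j₀, hj₀s, hj₀⟩
        rcases lt_or_gt_of_ne hj₀ with hneg | hpos
        · refine wlog (fun i => - cc i) (by simpa [neg_smul] using congrArg Neg.neg hccsum)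
            (fun i hi => by simp [hcc, hi]) ⟨j₀, hj₀s, by show 0 < -cc j₀; linarith⟩
        · refine wlog cc hccsum (fun i hi => by simp [hcc, hi]) ⟨j₀, hj₀s, hpos⟩
  obtain ⟨t, hlin, ν, h1, h2, h3⟩ := main Finset.univ μ hμ (by simp)
  exact ⟨t, hlin, ν, h1, h2, by rw [hxs, ← h3]⟩

lemma coneOf_isClosed (g : ι → E k) : IsClosed (coneOf g) := by
  classical
  -- union over linearly independent subsets
  have hdecomp : coneOf g = ⋃ s ∈ {s : Finset ι | LinearIndependent ℝ (fun i : s => g i)},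
      {x : E k | ∃ μ : ι → ℝ, (∀ i, 0 ≤ μ i) ∧ (∀ i ∉ s, μ i = 0) ∧ x = ∑ i, μ i • g i} := by
    ext x
    simp only [Set.mem_iUnion, Set.mem_setOf_eq]
    constructor
    · intro hx
      obtain ⟨s, hlin, μ, h1, h2, h3⟩ := coneOf_cara g x hx
      exact ⟨s, hlin, μ, h1, h2, h3⟩
    · rintro ⟨s, hlin, μ, h1, h2, h3⟩
      exact ⟨μ, h1, h3⟩
  rw [hdecomp]
  refine Set.Finite.isClosed_biUnion (Set.toFinite _) (fun s hs => ?_)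
  -- the image of the nonneg orthant under an injective linear map is closed
  set L : ({ i // i ∈ s } → ℝ) →ₗ[ℝ] E k := Fintype.linearCombination ℝ (fun i : s => g i)
    with hL
  have hLapp : ∀ μ : { i // i ∈ s } → ℝ, L μ = ∑ i : s, μ i • g i := by
    intro μ; rw [hL, Fintype.linearCombination_apply]
  have hker : LinearMap.ker L = ⊥ := by
    rw [LinearMap.ker_eq_bot']
    intro m hm
    rw [hLapp] at hm
    have := Fintype.linearIndependent_iff.1 hs m hm
    funext i; exact this i
  have hemb := LinearMap.isClosedEmbedding_of_injective hker
  have horth : IsClosed {μ : { i // i ∈ s } → ℝ | ∀ i, 0 ≤ μ i} := by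
    have : {μ : { i // i ∈ s } → ℝ | ∀ i, 0 ≤ μ i} = ⋂ i, {μ | 0 ≤ μ i} := by
      ext; simp
    rw [this]
    exact isClosed_iInter (fun i => isClosed_le continuous_const (continuous_apply i))
  have himg := hemb.isClosedMap _ horth
  convert himg using 1
  ext x
  simp only [Set.mem_setOf_eq, Set.mem_image]
  constructor
  · rintro ⟨μ, h1, h2, h3⟩
    refine ⟨fun i => μ i, fun i => h1 i, ?_⟩
    rw [hLapp, h3]
    rw [← Finset.sum_subset (Finset.subset_univ s) (fun i _ hi => by simp [h2 i hi])]
    rw [← Finset.sum_attach s (fun i => μ i • g i), Finset.univ_eq_attach]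
  · rintro ⟨μ, h1, h2⟩
    refine ⟨fun i => if h : i ∈ s then μ ⟨i, h⟩ else 0, fun i => ?_, fun i hi => by simp [hi], ?_⟩
    · by_cases h : i ∈ s <;> simp [h, h1]
    · rw [← h2, hLapp]
      rw [← Finset.sum_subset (Finset.subset_univ s)]
      · rw [← Finset.sum_attach s (fun i => (if h : i ∈ s then μ ⟨i, h⟩ else 0) • g i),
          Finset.univ_eq_attach]
        congr 1; ext i; simp [i.2]
      · intro i _ hi; simp [hi]

/-- Farkas' lemma. -/
lemma farkas (g : ι → E k) (x : E k)
    (h : ∀ z : E k, (∀ i, ⟪g i, z⟫ ≤ 0) → ⟪x, z⟫ ≤ 0) :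
    ∃ μ : ι → ℝ, (∀ i, 0 ≤ μ i) ∧ x = ∑ i, μ i • g i := by
  by_contra hcon
  have hx : x ∉ coneOf g := hcon
  set K : ConvexCone ℝ (E k) :=
    { carrier := coneOf g
      smul_mem' := by
        rintro c hc z ⟨μ, h1, h2⟩
        exact ⟨fun i => c * μ i, fun i => mul_nonneg hc.le (h1 i),
          by rw [h2, Finset.smul_sum]; simp [mul_smul]⟩
      add_mem' := by
        rintro z ⟨μ, h1, h2⟩ z' ⟨μ', h1', h2'⟩
        exact ⟨fun i => μ i + μ' i, fun i => add_nonneg (h1 i) (h1' i),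
          by rw [h2, h2', ← Finset.sum_add_distrib]; simp [add_smul]⟩ } with hK
  have hKne : (K : Set (E k)).Nonempty := ⟨0, ⟨0, fun i => le_refl 0, by simp⟩⟩
  have hKcl : IsClosed (K : Set (E k)) := coneOf_isClosed g
  obtain ⟨y, hy1, hy2⟩ : ∃ y, (∀ z ∈ K, 0 ≤ ⟪z, y⟫) ∧ ⟪y, x⟫ < 0 := by
    let PK : ProperCone ℝ (E k) :=
      { carrier := coneOf g
        add_mem' := fun ha hb => K.add_mem' ha hb
        zero_mem' := ⟨0, fun i => le_refl 0, by simp⟩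
        smul_mem' := by
          rintro c z ⟨μ, h1, h2⟩
          exact ⟨fun i => (c : ℝ) * μ i, fun i => mul_nonneg c.2 (h1 i),
            by rw [h2, Finset.smul_sum]; simp [mul_smul, NNReal.smul_def]⟩
        isClosed' := hKcl }
    obtain ⟨y, h1, h2⟩ := ProperCone.hyperplane_separation' PK (x₀ := x) hx
    exact ⟨y, h1, by rwa [real_inner_comm]⟩
  have hgix : ∀ i, ⟪g i, -y⟫ ≤ 0 := by
    intro i
    have hgi : g i ∈ K := ⟨fun j => if j = i then 1 else 0, fun j => by positivity,
      by simp [ite_smul]⟩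
    have := hy1 _ hgi
    rw [inner_neg_right]; linarith
  have := h _ hgix
  rw [inner_neg_right] at this
  rw [real_inner_comm] at hy2
  linarith


/-- Dual attainment, relative-interior Slater branch. -/
lemma dual_attain_ri {k q : ℕ} {Y : Set (E k)} (hYne : Y.Nonempty) (hYcp : IsCompact Y)
    (hYcv : Convex ℝ Y) {f : E k → ℝ} (hfc : ConvexOn ℝ Set.univ f)
    (hfd : Differentiable ℝ f) (T : E k →L[ℝ] E q) (c₀ : E q)
    {ystar : E k} (hys : ystar ∈ Y) (hyT : T ystar = c₀)
    (hmin : ∀ y ∈ Y, T y = c₀ → f ystar ≤ f y)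
    (hslater : ∃ y₀ ∈ intrinsicInterior ℝ Y, T y₀ = c₀) :
    ∃ lam : E q, ∀ y ∈ Y, f ystar ≤ f y + ⟪lam, T y - c₀⟫ := by
  classical
  obtain ⟨y₀, hy₀i, hy₀T⟩ := hslater
  have hy₀Y : y₀ ∈ Y := intrinsicInterior_subset hy₀i
  have hfcont : Continuous f := hfd.continuous
  -- bounds on f over Y
  obtain ⟨ymin, _, hmlb'⟩ := hYcp.exists_isMinOn hYne hfcont.continuousOn
  obtain ⟨ymax, _, hMub'⟩ := hYcp.exists_isMaxOn hYne hfcont.continuousOn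
  have hmlb : ∀ y ∈ Y, f ymin ≤ f y := fun y hy => hmlb' hy
  have hMub : ∀ y ∈ Y, f y ≤ f ymax := fun y hy => hMub' hy
  set m : ℝ := f ymin with hm
  set M : ℝ := f ymax with hM
  -- the shadow set K
  set K : Set (E q) := (fun y => T y - c₀) '' Y with hKdef
  have hK0 : (0 : E q) ∈ K := ⟨ystar, hys, by simp [hyT]⟩
  have hKne : K.Nonempty := ⟨0, hK0⟩
  have hKcv : Convex ℝ K := by
    rintro u₁ ⟨y₁, hy₁, rfl⟩ u₂ ⟨y₂, hy₂, rfl⟩ a b ha hb hab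
    refine ⟨a • y₁ + b • y₂, hYcv hy₁ hy₂ ha hb hab, ?_⟩
    have hc : a • c₀ + b • c₀ = c₀ := by rw [← add_smul, hab, one_smul]
    show T (a • y₁ + b • y₂) - c₀ = a • (T y₁ - c₀) + b • (T y₂ - c₀)
    conv_lhs => rw [← hc]
    rw [map_add, map_smul, map_smul]
    module
  -- the value function
  set v : E q → ℝ := fun u => sInf (f '' {y ∈ Y | T y - c₀ = u}) with hv
  have hbdd : ∀ u : E q, BddBelow (f '' {y ∈ Y | T y - c₀ = u}) :=
    fun u => ⟨m, by rintro t ⟨y, ⟨hy, _⟩, rfl⟩; exact hmlb y hy⟩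
  have hv_le : ∀ y ∈ Y, v (T y - c₀) ≤ f y := by
    intro y hy
    exact csInf_le (hbdd _) ⟨y, ⟨hy, rfl⟩, rfl⟩
  have hv_attain : ∀ u ∈ K, ∃ y ∈ Y, T y - c₀ = u ∧ v u = f y := by
    rintro u ⟨y', hy', rfl⟩
    have hfibcp : IsCompact {y ∈ Y | T y - c₀ = T y' - c₀} := by
      refine hYcp.inter_right ?_
      exact isClosed_eq (T.continuous.sub continuous_const) continuous_const
    obtain ⟨yo, hyo, hyomin'⟩ := hfibcp.exists_isMinOn ⟨y', hy', rfl⟩ hfcont.continuousOn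
    have hyomin : ∀ y'' ∈ {y ∈ Y | T y - c₀ = T y' - c₀}, f yo ≤ f y'' := fun y'' h => hyomin' h
    refine ⟨yo, hyo.1, hyo.2, ?_⟩
    refine le_antisymm (csInf_le (hbdd _) ⟨yo, hyo, rfl⟩) ?_
    refine le_csInf ⟨f yo, ⟨yo, hyo, rfl⟩⟩ ?_
    rintro t ⟨y'', hy'', rfl⟩
    exact hyomin y'' hy''
  have hv0 : v 0 = f ystar := by
    refine le_antisymm (by simpa [hyT] using hv_le ystar hys) ?_
    obtain ⟨y1, hy1, hTy1, hveq⟩ := hv_attain 0 hK0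
    rw [hveq]
    exact hmin y1 hy1 (by rwa [sub_eq_zero] at hTy1)
  have hvub : ∀ u ∈ K, v u ≤ M := by
    intro u hu; obtain ⟨y1, hy1, _, hveq⟩ := hv_attain u hu
    rw [hveq]; exact hMub y1 hy1
  have hvlb : ∀ u ∈ K, m ≤ v u := by
    intro u hu; obtain ⟨y1, hy1, _, hveq⟩ := hv_attain u hu
    rw [hveq]; exact hmlb y1 hy1
  have hvcvx : ∀ u₁ ∈ K, ∀ u₂ ∈ K, ∀ a b : ℝ, 0 ≤ a → 0 ≤ b → a + b = 1 →
      v (a • u₁ + b • u₂) ≤ a * v u₁ + b * v u₂ := by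
    intro u₁ hu₁ u₂ hu₂ a b ha hb hab
    obtain ⟨y₁, hy₁, hT₁, hv₁⟩ := hv_attain u₁ hu₁
    obtain ⟨y₂, hy₂, hT₂, hv₂⟩ := hv_attain u₂ hu₂
    have hymem : a • y₁ + b • y₂ ∈ Y := hYcv hy₁ hy₂ ha hb hab
    have hTc : T (a • y₁ + b • y₂) - c₀ = a • u₁ + b • u₂ := by
      have hc : a • c₀ + b • c₀ = c₀ := by rw [← add_smul, hab, one_smul]
      rw [← hT₁, ← hT₂]
      conv_lhs => rw [← hc]
      rw [map_add, map_smul, map_smul]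
      module
    calc v (a • u₁ + b • u₂) = v (T (a • y₁ + b • y₂) - c₀) := by rw [hTc]
      _ ≤ f (a • y₁ + b • y₂) := hv_le _ hymem
      _ ≤ a * f y₁ + b * f y₂ := hfc.2 (Set.mem_univ _) (Set.mem_univ _) ha hb hab
      _ = a * v u₁ + b * v u₂ := by rw [hv₁, hv₂]
  -- relative interior: a ball inside K within the span of K
  have hri : ∃ ρ' > 0, ∀ u ∈ Submodule.span ℝ K, ‖u‖ < ρ' → u ∈ K := by
    -- extract a ball around y₀ inside Y relative to the affine span
    obtain ⟨z₀, hz₀, hz₀e⟩ := mem_intrinsicInterior.1 hy₀i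
    obtain ⟨ε, hεpos, hball⟩ := Metric.mem_nhds_iff.1 (mem_interior_iff_mem_nhds.1 hz₀)
    have hballY : ∀ y' : E k, y' ∈ affineSpan ℝ Y → ‖y' - y₀‖ < ε → y' ∈ Y := by
      intro y' hy'span hy'n
      have : (⟨y', hy'span⟩ : affineSpan ℝ Y) ∈ Metric.ball z₀ ε := by
        rw [Metric.mem_ball, Subtype.dist_eq, hz₀e, dist_eq_norm]
        exact hy'n
      exact hball this
    -- a bounded linear section of T restricted to the direction of Y
    set V : Submodule ℝ (E k) := vectorSpan ℝ Y with hV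
    set T' : V →ₗ[ℝ] E q := T.toLinearMap.comp V.subtype with hT'
    have hKrange : Submodule.span ℝ K ≤ LinearMap.range T' := by
      rw [Submodule.span_le]
      rintro u ⟨y, hy, rfl⟩
      refine ⟨⟨y - y₀, ?_⟩, ?_⟩
      · exact vsub_mem_vectorSpan ℝ hy hy₀Y
      · show T (y - y₀) = T y - c₀
        rw [map_sub, hy₀T]
    obtain ⟨sec, hsec⟩ := T'.rangeRestrict.exists_rightInverse_of_surjective
      (LinearMap.range_rangeRestrict T')
    set secc := LinearMap.toContinuousLinearMap sec with hsecc
    set C : ℝ := ‖secc‖ with hC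
    have hCnn : 0 ≤ C := hC ▸ norm_nonneg secc
    refine ⟨ε / (C + 1), by positivity, ?_⟩
    intro u huspan hunorm
    have hur : u ∈ LinearMap.range T' := hKrange huspan
    set zs : V := sec ⟨u, hur⟩ with hzs
    have hTzs : T' zs = u := by
      have := LinearMap.ext_iff.1 hsec ⟨u, hur⟩
      have h2 : T'.rangeRestrict (sec ⟨u, hur⟩) = ⟨u, hur⟩ := this
      exact congrArg Subtype.val h2
    have hzsnorm : ‖(zs : E k)‖ < ε := by
      have h1 : ‖(zs : E k)‖ ≤ C * ‖u‖ := secc.le_opNorm ⟨u, hur⟩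
      have h4 : C * ‖u‖ ≤ C * (ε / (C + 1)) := mul_le_mul_of_nonneg_left hunorm.le hCnn
      have h5 : C * (ε / (C + 1)) < ε := by
        rw [mul_div_assoc', div_lt_iff₀ (by positivity)]
        nlinarith
      linarith
    set y' : E k := (zs : E k) + y₀ with hy'
    have hy'span : y' ∈ affineSpan ℝ Y := by
      have hdir : (zs : E k) ∈ (affineSpan ℝ Y).direction := by
        rw [direction_affineSpan]
        exact zs.2
      exact AffineSubspace.vadd_mem_of_mem_direction hdir (mem_affineSpan ℝ hy₀Y)
    have hy'Y : y' ∈ Y := by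
      apply hballY y' hy'span
      rw [hy']
      simpa using hzsnorm
    refine ⟨y', hy'Y, ?_⟩
    show T y' - c₀ = u
    rw [hy', map_add, hy₀T]
    have : T (zs : E k) = u := hTzs
    rw [this]; abel
  -- calmness of v at 0
  have hcalm : ∃ L : ℝ, 0 ≤ L ∧ ∀ u ∈ K, v 0 - L * ‖u‖ ≤ v u := by
    obtain ⟨ρ', hρ'pos, hρ'⟩ := hri
    set ρ'' : ℝ := ρ' / 2 with hρ''
    have hρ''pos : 0 < ρ'' := by positivity
    have hMv : v 0 ≤ M := hvub 0 hK0
    refine ⟨max 0 ((M - v 0) / ρ''), le_max_left _ _, ?_⟩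
    intro u hu
    rcases eq_or_ne u 0 with rfl | hune
    · simp
    have hunorm : 0 < ‖u‖ := norm_pos_iff.2 hune
    set L : ℝ := max 0 ((M - v 0) / ρ'') with hL
    have hLρ : M - v 0 ≤ L * ρ'' := by
      calc M - v 0 = ((M - v 0) / ρ'') * ρ'' := by field_simp
        _ ≤ L * ρ'' := by
            apply mul_le_mul_of_nonneg_right (le_max_right _ _) hρ''pos.le
    set u' : E q := (-(ρ'' / ‖u‖)) • u with hu'
    have hu'K : u' ∈ K := by
      apply hρ'
      · exact Submodule.smul_mem _ _ (Submodule.subset_span hu)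
      · rw [hu', norm_smul]
        rw [Real.norm_eq_abs, abs_neg, abs_div, abs_of_pos hρ''pos, abs_of_pos hunorm]
        rw [div_mul_cancel₀ _ hunorm.ne']
        simpa [hρ''] using half_lt_self hρ'pos
    set t : ℝ := ρ'' / (ρ'' + ‖u‖) with ht
    have htpos : 0 < t := by positivity
    have htlt : t ≤ 1 := by
      rw [ht, div_le_one (by positivity)]; linarith
    have hzero : (0 : E q) = t • u + (1 - t) • u' := by
      have hcoef : t + (1 - t) * (-(ρ'' / ‖u‖)) = 0 := by
        rw [ht]; field_simp; ring
      rw [hu', smul_smul, ← add_smul, hcoef, zero_smul]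
    have hkey : v 0 ≤ t * v u + (1 - t) * v u' := by
      rw [hzero]
      exact hvcvx u hu u' hu'K t (1 - t) htpos.le (by linarith) (by ring)
    have hvu'M : v u' ≤ M := hvub u' hu'K
    -- conclude
    have htdef : t * (ρ'' + ‖u‖) = ρ'' := by
      rw [ht]; field_simp
    have h1mt : (1 - t) * (ρ'' + ‖u‖) = ‖u‖ := by nlinarith
    have h2 : v 0 ≤ t * v u + (1 - t) * M := by
      nlinarith [mul_le_mul_of_nonneg_left hvu'M (by linarith : (0:ℝ) ≤ 1 - t)]
    have e1 : v 0 * (ρ'' + ‖u‖) ≤ ρ'' * v u + ‖u‖ * M := by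
      calc v 0 * (ρ'' + ‖u‖) ≤ (t * v u + (1 - t) * M) * (ρ'' + ‖u‖) :=
            mul_le_mul_of_nonneg_right h2 (by positivity)
        _ = (t * (ρ'' + ‖u‖)) * v u + ((1 - t) * (ρ'' + ‖u‖)) * M := by ring
        _ = ρ'' * v u + ‖u‖ * M := by rw [htdef, h1mt]
    have e2 : ρ'' * (v 0 - L * ‖u‖) ≤ ρ'' * v u := by
      nlinarith [mul_le_mul_of_nonneg_right hLρ hunorm.le]
    exact le_of_mul_le_mul_left e2 hρ''pos
  -- inf-convolution
  obtain ⟨L, hLnn, hLcalm⟩ := hcalm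
  set w : E q → ℝ := fun u => sInf ((fun z => v z + L * ‖u - z‖) '' K) with hw
  have hwbdd : ∀ u : E q, BddBelow ((fun z => v z + L * ‖u - z‖) '' K) := by
    intro u
    refine ⟨m, ?_⟩
    rintro t ⟨z, hz, rfl⟩
    show m ≤ v z + L * ‖u - z‖
    have h1 := hvlb z hz
    have h2 : 0 ≤ L * ‖u - z‖ := by positivity
    linarith
  have hwne : ∀ u : E q, ((fun z => v z + L * ‖u - z‖) '' K).Nonempty :=
    fun u => ⟨_, ⟨0, hK0, rfl⟩⟩
  have hwle : ∀ u ∈ K, w u ≤ v u := by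
    intro u hu
    have : v u + L * ‖u - u‖ = v u := by simp
    rw [hw]
    calc sInf _ ≤ v u + L * ‖u - u‖ := csInf_le (hwbdd u) ⟨u, hu, rfl⟩
      _ = v u := this
  have hw0 : v 0 ≤ w 0 := by
    refine le_csInf (hwne 0) ?_
    rintro t ⟨z, hz, rfl⟩
    have h1 := hLcalm z hz
    show v 0 ≤ v z + L * ‖(0 : E q) - z‖
    rw [zero_sub, norm_neg]; linarith
  have hwcvx : ConvexOn ℝ Set.univ w := by
    refine ⟨convex_univ, ?_⟩
    intro u₁ _ u₂ _ a b ha hb hab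
    refine le_of_forall_pos_le_add (fun δ hδ => ?_)
    obtain ⟨t₁, ⟨z₁, hz₁, rfl⟩, ht₁⟩ := Real.lt_sInf_add_pos (hwne u₁) (half_pos hδ)
    obtain ⟨t₂, ⟨z₂, hz₂, rfl⟩, ht₂⟩ := Real.lt_sInf_add_pos (hwne u₂) (half_pos hδ)
    have hzK : a • z₁ + b • z₂ ∈ K := hKcv hz₁ hz₂ ha hb hab
    have step1 : w (a • u₁ + b • u₂) ≤
        v (a • z₁ + b • z₂) + L * ‖(a • u₁ + b • u₂) - (a • z₁ + b • z₂)‖ :=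
      csInf_le (hwbdd _) ⟨_, hzK, rfl⟩
    have hnorm : ‖(a • u₁ + b • u₂) - (a • z₁ + b • z₂)‖ ≤ a * ‖u₁ - z₁‖ + b * ‖u₂ - z₂‖ := by
      have : (a • u₁ + b • u₂) - (a • z₁ + b • z₂) = a • (u₁ - z₁) + b • (u₂ - z₂) := by
        module
      rw [this]
      calc ‖a • (u₁ - z₁) + b • (u₂ - z₂)‖ ≤ ‖a • (u₁ - z₁)‖ + ‖b • (u₂ - z₂)‖ :=
            norm_add_le _ _
        _ = a * ‖u₁ - z₁‖ + b * ‖u₂ - z₂‖ := by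
            rw [norm_smul, norm_smul, Real.norm_eq_abs, Real.norm_eq_abs,
              abs_of_nonneg ha, abs_of_nonneg hb]
    have step2 : v (a • z₁ + b • z₂) ≤ a * v z₁ + b * v z₂ := hvcvx z₁ hz₁ z₂ hz₂ a b ha hb hab
    have := mul_le_mul_of_nonneg_left hnorm hLnn
    have hfin : w (a • u₁ + b • u₂) ≤ a * (v z₁ + L * ‖u₁ - z₁‖) + b * (v z₂ + L * ‖u₂ - z₂‖) := by
      calc w (a • u₁ + b • u₂) ≤ v (a • z₁ + b • z₂) + L * ‖(a • u₁ + b • u₂) - (a • z₁ + b • z₂)‖ := step1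
        _ ≤ (a * v z₁ + b * v z₂) + L * (a * ‖u₁ - z₁‖ + b * ‖u₂ - z₂‖) := by
            have := mul_le_mul_of_nonneg_left hnorm hLnn
            linarith
        _ = a * (v z₁ + L * ‖u₁ - z₁‖) + b * (v z₂ + L * ‖u₂ - z₂‖) := by ring
    have h1 : v z₁ + L * ‖u₁ - z₁‖ ≤ w u₁ + δ/2 := ht₁.le
    have h2 : v z₂ + L * ‖u₂ - z₂‖ ≤ w u₂ + δ/2 := ht₂.le
    have ha1 := mul_le_mul_of_nonneg_left h1 ha
    have hb1 := mul_le_mul_of_nonneg_left h2 hb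
    have hδ2 : a * (δ / 2) + b * (δ / 2) = δ / 2 := by
      rw [← add_mul, hab]; ring
    simp only [smul_eq_mul]
    nlinarith
  -- subgradient at 0 gives the multiplier
  obtain ⟨g, hg⟩ := exists_subgradient hwcvx 0
  refine ⟨-g, ?_⟩
  intro y hy
  have h1 : w 0 + ⟪g, (T y - c₀) - 0⟫ ≤ w (T y - c₀) := hg _
  have h2 : w (T y - c₀) ≤ v (T y - c₀) := hwle _ ⟨y, hy, rfl⟩
  have h3 : v (T y - c₀) ≤ f y := hv_le y hy
  have h4 : v 0 ≤ w 0 := hw0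
  have h5 : ⟪-g, T y - c₀⟫ = - ⟪g, (T y - c₀) - 0⟫ := by
    rw [sub_zero, inner_neg_left]
  rw [← hv0]
  rw [h5] at *
  linarith


/-- Dual attainment, polyhedral branch. -/
lemma dual_attain_poly {k q r : ℕ} (c : Fin r → E k) (d : Fin r → ℝ)
    {f : E k → ℝ} (hfc : ConvexOn ℝ Set.univ f) (hfd : Differentiable ℝ f)
    (T : E k →L[ℝ] E q) (c₀ : E q)
    {ystar : E k} (hys : ∀ i, ⟪c i, ystar⟫ ≤ d i) (hyT : T ystar = c₀)
    (hmin : ∀ y : E k, (∀ i, ⟪c i, y⟫ ≤ d i) → T y = c₀ → f ystar ≤ f y) :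
    ∃ lam : E q, ∀ y : E k, (∀ i, ⟪c i, y⟫ ≤ d i) → f ystar ≤ f y + ⟪lam, T y - c₀⟫ := by
  classical
  set act : Fin r → Prop := fun i => ⟪c i, ystar⟫ = d i with hact
  set e : Fin q → E q := fun j => EuclideanSpace.single j (1:ℝ) with he
  set tj : Fin q → E k := fun j => (ContinuousLinearMap.adjoint T) (e j) with htj
  have hadj : ∀ (j : Fin q) (z : E k), ⟪tj j, z⟫ = ⟪e j, T z⟫ := by
    intro j z; rw [htj]; exact ContinuousLinearMap.adjoint_inner_left T z (e j)
  have hej : ∀ (j : Fin q) (x : E q), ⟪e j, x⟫ = x j := by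
    intro j x
    rw [he]
    simpa using EuclideanSpace.inner_single_left j (1:ℝ) x
  -- generators
  set G : (Fin r ⊕ (Fin q ⊕ Fin q)) → E k := fun idx =>
    Sum.elim (fun i => if act i then c i else 0) (Sum.elim tj (fun j => - tj j)) idx with hG
  -- Farkas hypothesis: first-order optimality
  have hFH : ∀ z : E k, (∀ idx, ⟪G idx, z⟫ ≤ 0) → ⟪-gradient f ystar, z⟫ ≤ 0 := by
    intro z hz
    have hTz : T z = 0 := by
      ext j
      have h1 : ⟪tj j, z⟫ ≤ 0 := hz (Sum.inr (Sum.inl j))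
      have h2 : ⟪-tj j, z⟫ ≤ 0 := hz (Sum.inr (Sum.inr j))
      rw [inner_neg_left] at h2
      have h3 : ⟪tj j, z⟫ = 0 := le_antisymm h1 (by linarith)
      rw [hadj, hej] at h3
      simpa using h3
    have hactz : ∀ i, act i → ⟪c i, z⟫ ≤ 0 := by
      intro i hai
      have h5 := hz (Sum.inl i)
      have h4 : G (Sum.inl i) = c i := by
        simp only [hG, Sum.elim_inl]; exact if_pos hai
      rwa [h4] at h5
    -- step size
    set uu : Fin r → ℝ := fun i => if act i then 1 else (d i - ⟪c i, ystar⟫) / (|⟪c i, z⟫| + 1)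
      with huu
    set uo : Option (Fin r) → ℝ := fun o => o.elim 1 uu with huo
    set tstar : ℝ := Finset.univ.inf' ⟨none, Finset.mem_univ _⟩ uo with hts
    have huupos : ∀ i, 0 < uu i := by
      intro i
      rw [huu]
      show 0 < if act i then (1:ℝ) else (d i - ⟪c i, ystar⟫) / (|⟪c i, z⟫| + 1)
      by_cases hai : act i
      · rw [if_pos hai]; exact one_pos
      · have hlt : ⟪c i, ystar⟫ < d i := lt_of_le_of_ne (hys i) hai
        rw [if_neg hai]
        apply div_pos (by linarith) (by positivity)
    have htspos : 0 < tstar := by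
      rw [hts]; refine (Finset.lt_inf'_iff _).2 ?_
      rintro (_ | i) _
      · simp [huo]
      · simpa [huo] using huupos i
    have htsle : ∀ i, tstar ≤ uu i := by
      intro i
      have := Finset.inf'_le uo (Finset.mem_univ (some i))
      rw [← hts] at this
      simpa [huo] using this
    have hmem : ∀ t : ℝ, 0 ≤ t → t ≤ tstar → (∀ i, ⟪c i, ystar + t • z⟫ ≤ d i) := by
      intro t ht0 htt i
      rw [inner_add_right, real_inner_smul_right]
      by_cases hai : act i
      · have h1 : ⟪c i, z⟫ ≤ 0 := hactz i hai
        have : t * ⟪c i, z⟫ ≤ 0 := mul_nonpos_of_nonneg_of_nonpos ht0 h1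
        have h2 : ⟪c i, ystar⟫ = d i := hai
        linarith
      · have hden : 0 < |⟪c i, z⟫| + 1 := by positivity
        have h1 : t * ⟪c i, z⟫ ≤ t * (|⟪c i, z⟫| + 1) := by
          apply mul_le_mul_of_nonneg_left _ ht0
          have := le_abs_self ⟪c i, z⟫
          linarith
        have h2 : t * (|⟪c i, z⟫| + 1) ≤ uu i * (|⟪c i, z⟫| + 1) := by
          apply mul_le_mul_of_nonneg_right _ hden.le
          exact le_trans htt (htsle i)
        have h3 : uu i * (|⟪c i, z⟫| + 1) = d i - ⟪c i, ystar⟫ := by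
          rw [huu]
          show (if act i then (1:ℝ) else (d i - ⟪c i, ystar⟫) / (|⟪c i, z⟫| + 1)) * (|⟪c i, z⟫| + 1) = _
          rw [if_neg hai]
          field_simp
        linarith
    -- derivative of t ↦ f (ystar + t z) at 0 is nonneg
    set ϕ : ℝ → ℝ := fun t => f (ystar + t • z) with hϕ
    have hϕd : HasDerivAt ϕ ⟪gradient f ystar, z⟫ 0 := by
      have hcurve : HasDerivAt (fun t : ℝ => ystar + t • z) z 0 := by
        simpa using ((hasDerivAt_id (0:ℝ)).smul_const z).const_add ystar
      have hfde : HasFDerivAt f (InnerProductSpace.toDual ℝ (E k) (gradient f ystar))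
          (ystar + (0:ℝ) • z) := by
        rw [show ystar + (0:ℝ) • z = ystar by simp]
        exact (hasGradientAt_iff_hasFDerivAt).1 (hfd ystar).hasGradientAt
      simpa [hϕ, Function.comp_def] using hfde.comp_hasDerivAt (0:ℝ) hcurve
    have hslopes : ∀ t ∈ Set.Ioc (0:ℝ) tstar, 0 ≤ slope ϕ 0 t := by
      intro t ⟨ht0, htt⟩
      have hymem : ∀ i, ⟪c i, ystar + t • z⟫ ≤ d i := hmem t ht0.le htt
      have hTmem : T (ystar + t • z) = c₀ := by
        rw [map_add, map_smul, hTz, smul_zero, add_zero, hyT]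
      have hge : ϕ 0 ≤ ϕ t := by
        rw [hϕ]
        simpa using hmin _ hymem hTmem
      rw [slope_def_field]
      apply div_nonneg (by simpa [hϕ] using hge) (by linarith)
    have htend := hasDerivAt_iff_tendsto_slope.1 hϕd
    have htend2 : Filter.Tendsto (slope ϕ 0) (nhdsWithin 0 (Set.Ioi 0)) (nhds ⟪gradient f ystar, z⟫) :=
      htend.mono_left (nhdsWithin_mono 0 (fun x hx => ne_of_gt hx))
    have hio : Set.Ioc (0:ℝ) tstar ∈ nhdsWithin (0:ℝ) (Set.Ioi 0) :=
      Ioc_mem_nhdsGT_of_mem ⟨le_refl 0, htspos⟩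
    have hnn : 0 ≤ ⟪gradient f ystar, z⟫ :=
      ge_of_tendsto htend2 (Filter.eventually_iff_exists_mem.2 ⟨_, hio, hslopes⟩)
    rw [inner_neg_left]
    linarith
  obtain ⟨μ, hμnn, hμeq⟩ := farkas G (-gradient f ystar) hFH
  -- the multiplier
  set lam : E q := ∑ j, (μ (Sum.inr (Sum.inl j)) - μ (Sum.inr (Sum.inr j))) • e j with hlam
  refine ⟨lam, ?_⟩
  intro y hy
  have hgrad := grad_ineq hfc hfd ystar y
  -- compute ⟪-grad, y - ystar⟫
  have hsplit : ⟪-gradient f ystar, y - ystar⟫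
      = ∑ idx, μ idx * ⟪G idx, y - ystar⟫ := by
    rw [hμeq, sum_inner]
    congr 1; ext idx
    rw [real_inner_smul_left]
  have hinl : ∀ i : Fin r, μ (Sum.inl i) * ⟪G (Sum.inl i), y - ystar⟫ ≤ 0 := by
    intro i
    by_cases hai : act i
    · have h1 : ⟪c i, y - ystar⟫ ≤ 0 := by
        rw [inner_sub_right]
        have h2 : ⟪c i, ystar⟫ = d i := hai
        have h3 := hy i
        linarith
      have h4 : G (Sum.inl i) = c i := by
        simp only [hG, Sum.elim_inl]; exact if_pos hai
      rw [h4]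
      exact mul_nonpos_of_nonneg_of_nonpos (hμnn _) h1
    · have h4 : G (Sum.inl i) = 0 := by
        simp only [hG, Sum.elim_inl]; exact if_neg hai
      rw [h4, inner_zero_left, mul_zero]
  have hinr : ∑ j, (μ (Sum.inr (Sum.inl j)) * ⟪G (Sum.inr (Sum.inl j)), y - ystar⟫)
      + ∑ j, (μ (Sum.inr (Sum.inr j)) * ⟪G (Sum.inr (Sum.inr j)), y - ystar⟫)
      = ⟪lam, T y - c₀⟫ := by
    have hTy : T (y - ystar) = T y - c₀ := by rw [map_sub, hyT]
    rw [hlam, sum_inner, ← hTy]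
    rw [← Finset.sum_add_distrib]
    congr 1; ext j
    have hGl : G (Sum.inr (Sum.inl j)) = tj j := by simp [hG]
    have hGr : G (Sum.inr (Sum.inr j)) = - tj j := by simp [hG]
    rw [hGl, hGr, inner_neg_left, real_inner_smul_left, hadj, hej]
    ring_nf
  have hsum : ⟪-gradient f ystar, y - ystar⟫ ≤ ⟪lam, T y - c₀⟫ := by
    rw [hsplit, Fintype.sum_sum_type, Fintype.sum_sum_type]
    have h1 : ∑ i, μ (Sum.inl i) * ⟪G (Sum.inl i), y - ystar⟫ ≤ 0 :=
      Finset.sum_nonpos (fun i _ => hinl i)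
    rw [← hinr] at *
    linarith
  rw [inner_neg_left] at hsum
  have : - ⟪lam, T y - c₀⟫ ≤ ⟪gradient f ystar, y - ystar⟫ := by linarith
  linarith

/-- Dual attainment for the linearly-constrained convex program over a compact convex set,
under the combined Slater-type condition. -/
lemma dual_attain {k q : ℕ} {Y : Set (E k)} (hYne : Y.Nonempty) (hYcp : IsCompact Y)
    (hYcv : Convex ℝ Y) {f : E k → ℝ} (hfc : ConvexOn ℝ Set.univ f)
    (hfd : Differentiable ℝ f) (T : E k →L[ℝ] E q) (c₀ : E q)
    (hsl : ∃ y₀ ∈ Y, (¬ IsPolyhedral Y → y₀ ∈ intrinsicInterior ℝ Y) ∧ T y₀ = c₀) :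
    ∃ ystar ∈ Y, T ystar = c₀ ∧ (∀ y ∈ Y, T y = c₀ → f ystar ≤ f y) ∧
      ∃ lam : E q, ∀ y ∈ Y, f ystar ≤ f y + ⟪lam, T y - c₀⟫ := by
  classical
  obtain ⟨y₀, hy₀Y, hy₀ri, hy₀T⟩ := hsl
  -- minimizer over the feasible set
  set S : Set (E k) := {y ∈ Y | T y = c₀} with hS
  have hSne : S.Nonempty := ⟨y₀, hy₀Y, hy₀T⟩
  have hScp : IsCompact S := hYcp.inter_right (isClosed_eq T.continuous continuous_const)
  obtain ⟨ystar, hysS, hysmin'⟩ := hScp.exists_isMinOn hSne hfd.continuous.continuousOn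
  have hysmin : ∀ y ∈ Y, T y = c₀ → f ystar ≤ f y := fun y hy hT => hysmin' ⟨hy, hT⟩
  refine ⟨ystar, hysS.1, hysS.2, hysmin, ?_⟩
  by_cases hpoly : IsPolyhedral Y
  · obtain ⟨r, c, d, hY⟩ := hpoly
    have hys' : ∀ i, ⟪c i, ystar⟫ ≤ d i := by
      have := hysS.1; rw [hY] at this; exact this
    have hmin' : ∀ y : E k, (∀ i, ⟪c i, y⟫ ≤ d i) → T y = c₀ → f ystar ≤ f y := by
      intro y hy hT
      exact hysmin y (by rw [hY]; exact hy) hT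
    obtain ⟨lam, hlam⟩ := dual_attain_poly c d hfc hfd T c₀ hys' hysS.2 hmin'
    exact ⟨lam, fun y hy => hlam y (by rwa [hY] at hy)⟩
  · exact dual_attain_ri hYne hYcp hYcv hfc hfd T c₀ hysS.1 hysS.2 hysmin
      ⟨y₀, hy₀ri hpoly, hy₀T⟩

lemma dotE {k : ℕ} (l u : Fin k → ℝ) : l ⬝ᵥ u = ⟪toE l, toE u⟫ := by
  simp [PiLp.inner_apply, dotProduct, toE, mul_comm]


/-- Inexact cut, case (i): separable objective, linear coupling constraints only. With
`η(ε, x̄) = ε + ‖Bᵀ‖₂·√(2ε/α_D(x̄))·Diam(X)`, the affine function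
`C(x) = f₀(ŷ) + f₁(x̄) − η(ε, x̄) + ⟨∇f₁(x̄) + Bᵀλ̂, x − x̄⟩` is a cut for `𝒬` at `x̄` and
`𝒬(x̄) − C(x̄) ≤ η(ε, x̄)`. -/
theorem inexact_cut_separable_linear
    {n m q : ℕ} (X : Set (E m)) (Y : Set (E n))
    (hXne : X.Nonempty) (hXcp : IsCompact X) (hXcv : Convex ℝ X)
    (hYne : Y.Nonempty) (hYcp : IsCompact Y) (hYcv : Convex ℝ Y)
    (A : Matrix (Fin q) (Fin n) ℝ) (B : Matrix (Fin q) (Fin m) ℝ) (b : Fin q → ℝ)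
    (f₀ : E n → ℝ) (hf₀c : ConvexOn ℝ Set.univ f₀) (hf₀d : Differentiable ℝ f₀)
    (f₁ : E m → ℝ) (hf₁c : ConvexOn ℝ Set.univ f₁) (hf₁d : Differentiable ℝ f₁)
    -- Slater-type condition
    (hslater : ∀ x ∈ X, ∃ y ∈ Y, (¬ IsPolyhedral Y → y ∈ intrinsicInterior ℝ Y) ∧
      A.mulVec y + B.mulVec x = b)
    (xb : E m) (hxb : xb ∈ X)
    (ε : ℝ) (hε : 0 ≤ ε)
    -- strong concavity of the dual function on D_x̄ containing the dual optimal solutions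
    (αD : ℝ) (hαD : 0 < αD) (D : Set (E q)) (hDcv : Convex ℝ D)
    (hDopt : ∀ lam : E q,
      (∀ lam' : E q, thetaLin Y A B b f₀ f₁ xb lam' ≤ thetaLin Y A B b f₀ f₁ xb lam) →
      lam ∈ D)
    (hconc : StrongConcaveOnE D αD (thetaLin Y A B b f₀ f₁ xb))
    -- ŷ: ε-optimal feasible primal solution at x̄
    (yh : E n) (hyhY : yh ∈ Y) (hyhlin : A.mulVec yh + B.mulVec xb = b)
    (hyheps : ((f₀ yh + f₁ xb : ℝ) : EReal) ≤ QvarLin Y A B b f₀ f₁ xb + (ε : EReal))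
    -- λ̂ ∈ D_x̄: ε-optimal dual solution at x̄
    (lamh : E q) (hinD : lamh ∈ D)
    (hdualeps : QvarLin Y A B b f₀ f₁ xb - (ε : EReal) ≤ thetaLin Y A B b f₀ f₁ xb lamh)
    -- Diam(X)
    (Dm : ℝ) (hDm : IsGreatest ((fun pr : E m × E m => ‖pr.2 - pr.1‖) '' (X ×ˢ X)) Dm) :
    let η : ℝ := ε + ‖LinearMap.toContinuousLinearMap (Matrix.toEuclideanLin Bᵀ)‖
        * Real.sqrt (2 * ε / αD) * Dm
    let s : E m := gradient f₁ xb + toE (Bᵀ.mulVec lamh)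
    (∀ x ∈ X,
      ((f₀ yh + f₁ xb - η + ⟪s, x - xb⟫ : ℝ) : EReal) ≤ QvarLin Y A B b f₀ f₁ x) ∧
    QvarLin Y A B b f₀ f₁ xb ≤ ((f₀ yh + f₁ xb - η + ⟪s, xb - xb⟫ + η : ℝ) : EReal) := by
  intro η s
  classical
  have hη_def : η = ε + ‖LinearMap.toContinuousLinearMap (Matrix.toEuclideanLin Bᵀ)‖
      * Real.sqrt (2 * ε / αD) * Dm := rfl
  have hs_def : s = gradient f₁ xb + toE (Bᵀ.mulVec lamh) := rfl
  set T : E n →L[ℝ] E q := LinearMap.toContinuousLinearMap (Matrix.toEuclideanLin A) with hT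
  set c₀ : E q := toE (b - B.mulVec xb) with hc₀
  have hTy : ∀ y : E n, T y - c₀ = toE (A.mulVec y + B.mulVec xb - b) := by
    intro y
    show toE (A.mulVec y) - toE (b - B.mulVec xb) = toE (A.mulVec y + B.mulVec xb - b)
    ext i
    show A.mulVec y i - (b i - B.mulVec xb i) = A.mulVec y i + B.mulVec xb i - b i
    ring
  have hTiff : ∀ y : E n, T y = c₀ ↔ A.mulVec y + B.mulVec xb = b := by
    intro y
    rw [← sub_eq_zero (a := T y), hTy y]
    constructor
    · intro h
      have h2 : A.mulVec y + B.mulVec xb - b = 0 := congrArg WithLp.ofLp h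
      exact sub_eq_zero.1 h2
    · intro h
      show toE (A.mulVec y + B.mulVec xb - b) = 0
      rw [h, sub_self]; rfl
  -- weak duality
  have hweak : ∀ (x : E m) (l : E q), thetaLin Y A B b f₀ f₁ x l ≤ QvarLin Y A B b f₀ f₁ x := by
    intro x l
    unfold QvarLin thetaLin
    refine le_iInf fun y => le_iInf fun hy => le_iInf fun hfs => ?_
    refine le_trans (iInf₂_le y hy) ?_
    rw [hfs]
    simp
  -- θ at x̄ is real-valued
  have hthetaEq : ∀ l : E q, ∃ θr : ℝ, thetaLin Y A B b f₀ f₁ xb l = (θr : EReal) := by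
    intro l
    have hcont : Continuous fun y : E n =>
        f₀ y + f₁ xb + (l : Fin q → ℝ) ⬝ᵥ (A.mulVec y + B.mulVec xb - b) := by
      apply Continuous.add (hf₀d.continuous.add continuous_const)
      have heq : (fun y : E n => (l : Fin q → ℝ) ⬝ᵥ (A.mulVec y + B.mulVec xb - b))
          = fun y : E n => ⟪(l : E q), T y - c₀⟫ := by
        funext y
        rw [hTy y]
        exact dotE l (A.mulVec y + B.mulVec xb - b)
      rw [heq]
      exact Continuous.inner continuous_const (T.continuous.sub continuous_const)
    obtain ⟨ym, hymY, hymmin⟩ := hYcp.exists_isMinOn hYne hcont.continuousOn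
    refine ⟨f₀ ym + f₁ xb + (l : Fin q → ℝ) ⬝ᵥ (A.mulVec ym + B.mulVec xb - b), ?_⟩
    unfold thetaLin
    refine le_antisymm (iInf₂_le ym hymY) (le_iInf fun y => le_iInf fun hy => ?_)
    exact EReal.coe_le_coe_iff.2 (hymmin hy)
  -- dual attainment
  obtain ⟨y₀, hy₀Y, hy₀ri, hy₀feas⟩ := hslater xb hxb
  obtain ⟨ystar, hysY, hysT, hysmin, lamS, hlamS⟩ :=
    dual_attain hYne hYcp hYcv hf₀c hf₀d T c₀ ⟨y₀, hy₀Y, hy₀ri, (hTiff y₀).2 hy₀feas⟩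
  set Q : ℝ := f₀ ystar + f₁ xb with hQ
  have hQvar : QvarLin Y A B b f₀ f₁ xb = (Q : EReal) := by
    refine le_antisymm ?_ ?_
    · unfold QvarLin
      exact iInf_le_of_le ystar (iInf_le_of_le hysY (iInf_le_of_le ((hTiff ystar).1 hysT) le_rfl))
    · unfold QvarLin
      refine le_iInf fun y => le_iInf fun hy => le_iInf fun hfs => ?_
      refine EReal.coe_le_coe_iff.2 ?_
      have := hysmin y hy ((hTiff y).2 hfs)
      rw [hQ]; linarith
  -- real inequality underlying θ(λ⋆) ≥ Q
  have hQtheta : ∀ y ∈ Y, Q ≤ f₀ y + f₁ xb + (lamS : Fin q → ℝ) ⬝ᵥ (A.mulVec y + B.mulVec xb - b) := by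
    intro y hy
    have h1 := hlamS y hy
    have h2 : ⟪lamS, T y - c₀⟫ = (lamS : Fin q → ℝ) ⬝ᵥ (A.mulVec y + B.mulVec xb - b) := by
      rw [hTy y]
      exact (dotE (lamS : Fin q → ℝ) (A.mulVec y + B.mulVec xb - b)).symm
    rw [h2] at h1
    rw [hQ]; linarith
  have hθQ : thetaLin Y A B b f₀ f₁ xb lamS = (Q : EReal) := by
    refine le_antisymm (by rw [← hQvar]; exact hweak xb lamS) ?_
    unfold thetaLin
    refine le_iInf fun y => le_iInf fun hy => ?_
    exact EReal.coe_le_coe_iff.2 (hQtheta y hy)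
  have hmaxD : lamS ∈ D := by
    refine hDopt lamS (fun l' => ?_)
    rw [hθQ, ← hQvar]
    exact hweak xb l'
  obtain ⟨θhr, hθhr⟩ := hthetaEq lamh
  have hθhr_ge : Q - ε ≤ θhr := by
    rw [hQvar, hθhr, ← EReal.coe_sub] at hdualeps
    exact EReal.coe_le_coe_iff.1 hdualeps
  have hθhr_le : θhr ≤ Q := by
    have := hweak xb lamh
    rw [hθhr, hQvar] at this
    exact EReal.coe_le_coe_iff.1 this
  have hyhQ : f₀ yh + f₁ xb - ε ≤ Q := by
    rw [hQvar, ← EReal.coe_add] at hyheps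
    have := EReal.coe_le_coe_iff.1 hyheps
    linarith
  have hQyh : Q ≤ f₀ yh + f₁ xb := by
    have := hysmin yh hyhY ((hTiff yh).2 hyhlin)
    rw [hQ]; linarith
  -- distance bound from strong concavity
  set dd : ℝ := ‖lamS - lamh‖ with hdd_def
  have hccr : ∀ t ∈ Set.Icc (0:ℝ) 1,
      t * Q + (1 - t) * θhr + αD * t * (1 - t) / 2 * dd ^ 2 ≤ Q := by
    intro t ht
    have h1 := hconc hmaxD (by rw [hθQ]; exact EReal.coe_ne_top Q)
      (by rw [hθQ]; exact EReal.coe_ne_bot Q) hinD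
      (by rw [hθhr]; exact EReal.coe_ne_top θhr)
      (by rw [hθhr]; exact EReal.coe_ne_bot θhr) t ht
    have h2 : thetaLin Y A B b f₀ f₁ xb (t • lamS + (1 - t) • lamh) ≤ (Q : EReal) := by
      rw [← hQvar]; exact hweak xb _
    have h3 := le_trans h1 h2
    rw [hθQ, hθhr, EReal.toReal_coe, EReal.toReal_coe] at h3
    exact EReal.coe_le_coe_iff.1 h3
  have hαdd : αD * dd ^ 2 / 2 ≤ ε := by
    by_contra hcon
    push_neg at hcon
    set A2 : ℝ := αD * dd ^ 2 / 2 with hA2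
    have hA2pos : 0 < A2 := lt_of_le_of_lt hε hcon
    set t₀ : ℝ := (ε / A2 + 1) / 2 with ht₀
    have hfrac : ε / A2 < 1 := (div_lt_one hA2pos).2 hcon
    have hfrac0 : 0 ≤ ε / A2 := div_nonneg hε hA2pos.le
    have ht₀mem : t₀ ∈ Set.Icc (0:ℝ) 1 := ⟨by rw [ht₀]; linarith, by rw [ht₀]; linarith⟩
    have ht₀lt : t₀ < 1 := by rw [ht₀]; linarith
    have ht₀gt : ε / A2 < t₀ := by rw [ht₀]; linarith
    have hkey := hccr t₀ ht₀mem
    have h1mtpos : 0 < 1 - t₀ := by linarith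
    have e1 : αD * t₀ * (1 - t₀) / 2 * dd ^ 2 ≤ (1 - t₀) * ε := by
      have hQθ : Q - θhr ≤ ε := by linarith
      nlinarith [mul_le_mul_of_nonneg_left hQθ h1mtpos.le]
    have e1' : (t₀ * A2) * (1 - t₀) ≤ ε * (1 - t₀) := by
      have : (t₀ * A2) * (1 - t₀) = αD * t₀ * (1 - t₀) / 2 * dd ^ 2 := by rw [hA2]; ring
      rw [this]
      linarith [e1]
    have e2 : t₀ * A2 ≤ ε := le_of_mul_le_mul_right (by linarith [e1']) h1mtpos
    have e3 : ε < t₀ * A2 := by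
      have := (div_lt_iff₀ hA2pos).1 ht₀gt
      linarith
    linarith
  have hdd_le : dd ≤ Real.sqrt (2 * ε / αD) := by
    have h2 : dd ^ 2 ≤ 2 * ε / αD := by
      rw [le_div_iff₀ hαD]
      nlinarith [hαdd]
    exact (Real.le_sqrt (norm_nonneg _) (by positivity)).2 h2
  -- norm facts
  set Bop : E q →L[ℝ] E m := LinearMap.toContinuousLinearMap (Matrix.toEuclideanLin Bᵀ) with hBop
  have hDm0 : 0 ≤ Dm := by
    have := hDm.2 ⟨(xb, xb), ⟨hxb, hxb⟩, rfl⟩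
    simpa using this
  constructor
  · -- the cut inequality
    intro x hx
    have hxDm : ‖x - xb‖ ≤ Dm := hDm.2 ⟨(xb, x), ⟨hxb, hx⟩, rfl⟩
    have key : ∀ y ∈ Y, (f₀ yh + f₁ xb - η + ⟪s, x - xb⟫ : ℝ)
        ≤ f₀ y + f₁ x + (lamS : Fin q → ℝ) ⬝ᵥ (A.mulVec y + B.mulVec x - b) := by
      intro y hy
      -- split the dot product
      have hsplitdot : (lamS : Fin q → ℝ) ⬝ᵥ (A.mulVec y + B.mulVec x - b)
          = (lamS : Fin q → ℝ) ⬝ᵥ (A.mulVec y + B.mulVec xb - b)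
            + (lamS : Fin q → ℝ) ⬝ᵥ (B.mulVec (x - xb)) := by
        rw [← dotProduct_add]
        congr 1
        funext i
        have : B.mulVec (x - xb) i = B.mulVec x i - B.mulVec xb i := by
          simp [Matrix.mulVec, dotProduct, mul_sub, Finset.sum_sub_distrib]
        simp only [Pi.add_apply, Pi.sub_apply, this]
        ring
      have h1 := hQtheta y hy
      have h2 : f₁ xb + ⟪gradient f₁ xb, x - xb⟫ ≤ f₁ x := grad_ineq hf₁c hf₁d xb x
      have h3 : (lamS : Fin q → ℝ) ⬝ᵥ (B.mulVec (x - xb))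
          = ⟪toE (Bᵀ.mulVec (lamS : Fin q → ℝ)), x - xb⟫ := by
        rw [Matrix.dotProduct_mulVec, ← Matrix.mulVec_transpose]
        exact dotE (Bᵀ.mulVec (lamS : Fin q → ℝ)) (x - xb)
      have h4 : toE (Bᵀ.mulVec (lamS : Fin q → ℝ))
          = toE (Bᵀ.mulVec (lamh : Fin q → ℝ)) + Bop (lamS - lamh) := by
        show toE (Bᵀ.mulVec (lamS : Fin q → ℝ))
          = toE (Bᵀ.mulVec (lamh : Fin q → ℝ)) + toE (Bᵀ.mulVec ((lamS - lamh : E q) : Fin q → ℝ))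
        ext i
        show Bᵀ.mulVec (lamS : Fin q → ℝ) i
          = Bᵀ.mulVec (lamh : Fin q → ℝ) i + Bᵀ.mulVec ((lamS : Fin q → ℝ) - lamh) i
        simp [Matrix.mulVec, dotProduct, mul_sub, Finset.sum_sub_distrib]
      have h5 : |⟪Bop (lamS - lamh), x - xb⟫| ≤ (‖Bop‖ * dd) * ‖x - xb‖ := by
        calc |⟪Bop (lamS - lamh), x - xb⟫| ≤ ‖Bop (lamS - lamh)‖ * ‖x - xb‖ :=
              abs_real_inner_le_norm _ _
          _ ≤ (‖Bop‖ * dd) * ‖x - xb‖ := by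
              apply mul_le_mul_of_nonneg_right (Bop.le_opNorm _) (norm_nonneg _)
      have h8 : (‖Bop‖ * dd) * ‖x - xb‖ ≤ ‖Bop‖ * Real.sqrt (2 * ε / αD) * Dm := by
        apply mul_le_mul _ hxDm (norm_nonneg _) (by positivity)
        exact mul_le_mul_of_nonneg_left hdd_le (norm_nonneg _)
      have hs_split : ⟪s, x - xb⟫
          = ⟪gradient f₁ xb, x - xb⟫ + ⟪toE (Bᵀ.mulVec (lamh : Fin q → ℝ)), x - xb⟫ := by
        rw [hs_def, inner_add_left]
      have hinner4 : ⟪toE (Bᵀ.mulVec (lamS : Fin q → ℝ)), x - xb⟫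
          = ⟪toE (Bᵀ.mulVec (lamh : Fin q → ℝ)), x - xb⟫ + ⟪Bop (lamS - lamh), x - xb⟫ := by
        rw [h4, inner_add_left]
      have habs : -(‖Bop‖ * Real.sqrt (2 * ε / αD) * Dm) ≤ ⟪Bop (lamS - lamh), x - xb⟫ := by
        have := neg_abs_le ⟪Bop (lamS - lamh), x - xb⟫
        linarith [h5, h8]
      rw [hsplitdot, h3, hinner4, hs_split, hη_def]
      linarith
    have hle : ((f₀ yh + f₁ xb - η + ⟪s, x - xb⟫ : ℝ) : EReal)
        ≤ thetaLin Y A B b f₀ f₁ x lamS := by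
      unfold thetaLin
      exact le_iInf fun y => le_iInf fun hy => EReal.coe_le_coe_iff.2 (key y hy)
    exact hle.trans (hweak x lamS)
  · -- the tightness inequality
    have h1 : QvarLin Y A B b f₀ f₁ xb ≤ ((f₀ yh + f₁ xb : ℝ) : EReal) := by
      unfold QvarLin
      exact iInf_le_of_le yh (iInf_le_of_le hyhY (iInf_le_of_le hyhlin le_rfl))
    have h2 : (f₀ yh + f₁ xb - η + ⟪s, xb - xb⟫ + η : ℝ) = f₀ yh + f₁ xb := by
      rw [sub_self, inner_zero_right]; ring
    rw [h2]
    exact h1
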